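/- Let ℓ > 0, n ∈ ℕ with n ≥ 2, and let φ : (ℝ^d)^n → ℝ be a symmetric continuous function with lim_{|x₁|→∞} sup_{(x₂,…,x_n)∈(ℝ^d)^{n−1}} |φ(x₁,x₂,…,x_n)| / ∏_{i=1}^n (1+|x_i|^{ℓ/2}) = 0. For μ̃ ∈ 𝒫_ℓ(ℝ^d) define δU/δm(μ̃,x₁) = n ∫_{(ℝ^d)^{n−1}} (φ(x₁,x₂,…,x_n) − φ(0,x₂,…,x_n)) μ̃(dx₂)⋯μ̃(dx_n). Then for every μ ∈ 𝒫_ℓ(ℝ^d) and r > 0 there exists a finite constant C̃ not depending on μ₁, μ₂ such that for all μ₁, μ₂ in the W_ℓ-ball B(μ,r), sup_{x₁∈ℝ^d} |δU/δm(μ₂,x₁) − δU/δm(μ₁,x₁)| / (1+|x₁|^{ℓ/2}) ≤ C̃ ∫_{ℝ^d} (1+|x|^{ℓ/2}) |μ₂−μ₁|(dx); i.e. hypothesis RU6 holds with α = 1. -/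

import Mathlib

open MeasureTheory ProbabilityTheory Filter ENNReal Topology

noncomputable section

/-- `ℝ^d` with the Euclidean norm. -/
abbrev Euc (d : ℕ) := EuclideanSpace ℝ (Fin d)

namespace Paper

variable {E : Type*} [MeasurableSpace E]

/-- The set of couplings between two measures. -/
def couplings (μ ν : Measure E) : Set (Measure (E × E)) :=
  {ρ | IsProbabilityMeasure ρ ∧ ρ.map Prod.fst = μ ∧ ρ.map Prod.snd = ν}

/-- The `ℓ`-Wasserstein distance `W_ℓ` (in `ℝ≥0∞`), for `ℓ > 0` with cost `dist^ℓ` and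
exponent `1/(ℓ ∨ 1)`, and for `ℓ = 0` with cost `1 ∧ dist`. -/
def Wl [PseudoMetricSpace E] (ℓ : ℝ) (μ ν : Measure E) : ℝ≥0∞ :=
  ⨅ ρ ∈ couplings μ ν,
    if ℓ = 0 then ∫⁻ p, ENNReal.ofReal (min 1 (dist p.1 p.2)) ∂ρ
    else (∫⁻ p, ENNReal.ofReal (dist p.1 p.2 ^ ℓ) ∂ρ) ^ (1 / max ℓ 1)

variable [NormedAddCommGroup E]

/-- Membership in the Wasserstein space `𝒫_ℓ`. -/
def MemP (ℓ : ℝ) (μ : Measure E) : Prop :=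
  IsProbabilityMeasure μ ∧ ∫⁻ x, ENNReal.ofReal (‖x‖ ^ ℓ) ∂μ < ⊤

/-- The `W_ℓ`-ball of radius `r` centered at `μ`, inside `𝒫_ℓ`. -/
def ball (ℓ : ℝ) (μ : Measure E) (r : ℝ) : Set (Measure E) :=
  {m | MemP ℓ m ∧ Wl ℓ m μ < ENNReal.ofReal r}

/-- The average `(1/N) ∑_{i=1}^N ν_i` (indexing `ν 0 = ν_1`). -/
def avg (ν : ℕ → Measure E) (N : ℕ) : Measure E :=
  (N : ℝ≥0∞)⁻¹ • ∑ i ∈ Finset.range N, ν i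

/-- The empirical measure `μ_N = (1/N) ∑_{i=1}^N δ_{X_i}` (indexing `X 0 = X_1`). -/
def emp {Ω : Type*} (X : ℕ → Ω → E) (N : ℕ) (ω : Ω) : Measure E :=
  (N : ℝ≥0∞)⁻¹ • ∑ i ∈ Finset.range N, Measure.dirac (X i ω)

/-- Condition TX: there is `β ∈ (0,1)` with
`∑_{i≥1} (1/i) E((|X_i|^ℓ - i^β) 1_{|X_i|^ℓ > i^β}) < ∞` (indexing `X 0 = X_1`). -/
def TX {Ω : Type*} [MeasurableSpace Ω] (Pr : Measure Ω) (X : ℕ → Ω → E) (ℓ : ℝ) : Prop :=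
  ∃ β ∈ Set.Ioo (0:ℝ) 1,
    (∑' i : ℕ, ((i : ℝ≥0∞) + 1)⁻¹ *
      ∫⁻ ω in {ω | ((i : ℝ) + 1) ^ β < ‖X i ω‖ ^ ℓ},
        ENNReal.ofReal (‖X i ω‖ ^ ℓ - ((i : ℝ) + 1) ^ β) ∂Pr) < ⊤

/-- The total variation measure `|μ - ν|` of the difference of two (finite) measures. -/
def mdiff (μ ν : Measure E) : Measure E := (μ - ν) + (ν - μ)

/-- The norm `‖μ - ν‖_ℓ = sup {∫ f d(μ-ν) : f measurable, |f| ≤ 1 + |x|^ℓ}`. -/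
def normLdiff (ℓ : ℝ) (μ ν : Measure E) : ℝ :=
  sSup {c | ∃ f : E → ℝ, Measurable f ∧ (∀ x, |f x| ≤ 1 + ‖x‖ ^ ℓ) ∧
    c = ∫ x, f x ∂μ - ∫ x, f x ∂ν}

/-- Integral of `f` against a signed measure. -/
def sInt (τ : SignedMeasure E) (f : E → ℝ) : ℝ :=
  ∫ x, f x ∂τ.toJordanDecomposition.posPart - ∫ x, f x ∂τ.toJordanDecomposition.negPart

/-- `U` admits `DU` as linear functional derivative at `μ` (on `𝒫_ℓ`). -/
def HasLFDAt (ℓ : ℝ) (U : Measure E → ℝ) (μ : Measure E) (DU : E → ℝ) : Prop :=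
  Measurable DU ∧ (∃ C : ℝ, ∀ y, |DU y| ≤ C * (1 + ‖y‖ ^ ℓ)) ∧
    ∀ ν : Measure E, MemP ℓ ν →
      HasDerivWithinAt (fun ε : ℝ => U (ENNReal.ofReal (1 - ε) • μ + ENNReal.ofReal ε • ν))
        ((∫ y, DU y ∂ν) - ∫ y, DU y ∂μ) (Set.Ici 0) 0

/-- RU1: `U` admits a linear functional derivative `DU m` at every `m` in the ball `B(μ,r)`. -/
def RU1 (ℓ r : ℝ) (U : Measure E → ℝ) (μ : Measure E) (DU : Measure E → E → ℝ) : Prop :=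
  ∀ m ∈ ball ℓ μ r, HasLFDAt ℓ U m (DU m)

/-- RU2: uniform growth bound `|δU/δm(m,x)| ≤ C (1+|x|^{ℓ/2})` on the ball. -/
def RU2 (ℓ r : ℝ) (μ : Measure E) (DU : Measure E → E → ℝ) : Prop :=
  ∃ C : ℝ, ∀ m ∈ ball ℓ μ r, ∀ x, |DU m x| ≤ C * (1 + ‖x‖ ^ (ℓ / 2))

/-- RU3: `sup_x |δU/δm(m,x) - δU/δm(μ,x)|/(1+|x|^{ℓ/2}) → 0` as `W_ℓ(m,μ) → 0`. -/
def RU3 (ℓ r : ℝ) (μ : Measure E) (DU : Measure E → E → ℝ) : Prop :=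
  ∀ ε > (0:ℝ), ∃ δ > (0:ℝ), ∀ m ∈ ball ℓ μ r, Wl ℓ m μ < ENNReal.ofReal δ →
    ∀ x, |DU m x - DU μ x| ≤ ε * (1 + ‖x‖ ^ (ℓ / 2))

/-- RU4: `x ↦ δU/δm(μ,x)` is continuous `μ`-a.e. -/
def RU4 (μ : Measure E) (DU : Measure E → E → ℝ) : Prop :=
  ∀ᵐ x ∂μ, ContinuousAt (DU μ) x

/-- RU5 (with exponent `α`): Hölder-type stability of the derivative on the ball. -/
def RU5 (ℓ α r : ℝ) (μ : Measure E) (DU : Measure E → E → ℝ) : Prop :=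
  ∃ C : ℝ, ∀ m₁ ∈ ball ℓ μ r, ∀ m₂ ∈ ball ℓ μ r, ∀ x,
    |DU m₂ x - DU m₁ x| ≤
      C * ((1 + ‖x‖ ^ ℓ) * (((mdiff m₂ m₁) Set.univ).toReal) ^ α +
        (1 + ‖x‖ ^ (ℓ * (1 - α))) * (∫ y, ‖y‖ ^ ℓ ∂(mdiff m₂ m₁)) ^ α)

/-- RU6 (with exponent `α`): Hölder-type stability of the derivative on the ball. -/
def RU6 (ℓ α r : ℝ) (μ : Measure E) (DU : Measure E → E → ℝ) : Prop :=
  ∃ C : ℝ, ∀ m₁ ∈ ball ℓ μ r, ∀ m₂ ∈ ball ℓ μ r, ∀ x,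
    |DU m₂ x - DU m₁ x| ≤
      C * (∫ y, (1 + ‖y‖ ^ (ℓ / (2 * α))) ∂(mdiff m₂ m₁)) ^ α * (1 + ‖x‖ ^ (ℓ / 2))

/-- Lyapunov condition L1: `PV(x) ≤ γ V(x) + K`. -/
def Lyap1 (P : Kernel E E) (V : E → ℝ) (γ K : ℝ) : Prop :=
  ∀ x, ∫⁻ y, ENNReal.ofReal (V y) ∂(P x) ≤ ENNReal.ofReal (γ * V x + K)

/-- Lyapunov minorization condition: `(P(x,·) ∧ P(y,·))(ℝ^d) ≥ ρ` when `V(x)+V(y) ≤ R`. -/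
def Lyap2 (P : Kernel E E) (V : E → ℝ) (R ρ : ℝ) : Prop :=
  ∀ x y, V x + V y ≤ R → ENNReal.ofReal ρ ≤ (P x ⊓ P y) Set.univ

/-- The full Lyapunov condition with data `(V, γ, K, R, ρ)`. -/
def Lyapunov (P : Kernel E E) (V : E → ℝ) (γ K R ρ : ℝ) : Prop :=
  Measurable V ∧ (∀ x, 0 ≤ V x) ∧ γ ∈ Set.Ioo (0:ℝ) 1 ∧ 0 ≤ K ∧
    2 * K / (1 - γ) < R ∧ ρ ∈ Set.Ioc (0:ℝ) 1 ∧ Lyap1 P V γ K ∧ Lyap2 P V R ρ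

/-- `n` steps of the kernel `P` starting from the measure `σ`, i.e. `σ Pⁿ`. -/
def kIter (P : Kernel E E) (σ : Measure E) : ℕ → Measure E
  | 0 => σ
  | n + 1 => (kIter P σ n).bind (⇑P)

/-- `Pⁿ f (x)`. -/
def Pn (P : Kernel E E) (n : ℕ) (f : E → ℝ) (x : E) : ℝ :=
  ∫ y, f y ∂(kIter P (Measure.dirac x) n)

/-- The contraction factor `χ(ρ,β,γ,K,R)`. -/
def chi (ρ β γ K R : ℝ) : ℝ :=
  max (1 - ρ + β * K) ((2 + β * γ * R + 2 * β * K) / (2 + β * R))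

/-- The distance `d_{V,β}(θ,σ) = sup {|θ(φ) - σ(φ)| : ‖φ‖_{V,β} ≤ 1}`. -/
def dV (V : E → ℝ) (β : ℝ) (θ σ' : Measure E) : ℝ :=
  sSup {c | ∃ φ : E → ℝ, Measurable φ ∧ (∀ x, |φ x| ≤ 1 + β * V x) ∧
    c = |(∫ x, φ x ∂θ) - ∫ x, φ x ∂σ'|}

/-- `(X_i)_{i ≥ 1}` (indexed so that `X 0 = X_1`) is a Markov chain with initial law `ν₁`
and transition kernel `P` on the probability space `(Ω, Pr)`. -/
def IsMarkovChain {Ω : Type*} [MeasurableSpace Ω] (Pr : Measure Ω) (X : ℕ → Ω → E)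
    (ν₁ : Measure E) (P : Kernel E E) : Prop :=
  (∀ i, Measurable (X i)) ∧ Pr.map (X 0) = ν₁ ∧
    ∀ i : ℕ, ∀ A : Set E, MeasurableSet A →
      (fun ω => ((P (X i ω)) A).toReal) =ᵐ[Pr]
        Pr[fun ω => Set.indicator A (fun _ => (1:ℝ)) (X (i + 1) ω) |
          MeasurableSpace.comap (fun ω (j : Fin (i + 1)) => X j.1 ω) MeasurableSpace.pi]

/-- Convergence in distribution of the real random variables `Y N` to the law `G`. -/
def cid {Ω : Type*} [MeasurableSpace Ω] (Pr : Measure Ω) (Y : ℕ → Ω → ℝ) (G : Measure ℝ) : Prop :=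
  ∀ f : BoundedContinuousFunction ℝ ℝ,
    Tendsto (fun N => ∫ ω, f (Y N ω) ∂Pr) atTop (𝓝 (∫ x, f x ∂G))

end Paper

open Paper



section Helpers

open MeasureTheory

lemma aux_le_sub_add {α : Type*} [MeasurableSpace α] (μ ν : Measure α)
    [IsFiniteMeasure μ] [IsFiniteMeasure ν] : μ ≤ (μ - ν) + ν := by
  obtain ⟨s, hsm, hs, hsc⟩ := hahn_decomposition (μ := μ) (ν := ν)
  set dm : Measure α := μ.restrict s - ν.restrict s with hdm
  have hle : ν.restrict s ≤ μ.restrict s := by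
    refine Measure.le_iff.2 fun t ht => ?_
    rw [Measure.restrict_apply ht, Measure.restrict_apply ht]
    exact hs _ (ht.inter hsm) Set.inter_subset_right
  have hdapp : ∀ t, MeasurableSet t → dm t = μ (t ∩ s) - ν (t ∩ s) := by
    intro t ht
    rw [hdm, Measure.sub_apply ht hle, Measure.restrict_apply ht, Measure.restrict_apply ht]
  have hmu_le : μ ≤ dm + ν := by
    refine Measure.le_iff.2 fun t ht => ?_
    have h1 : ν (t ∩ s) ≤ μ (t ∩ s) := hs _ (ht.inter hsm) Set.inter_subset_right
    have h2 : μ (t \ s) ≤ ν (t \ s) := hsc _ (ht.diff hsm) (Set.diff_subset_iff.2 (by simp))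
    have h3 : ν (t ∩ s) + ν (t \ s) = ν t := measure_inter_add_diff t hsm
    have h4 : μ (t ∩ s) + μ (t \ s) = μ t := measure_inter_add_diff t hsm
    have : μ t ≤ (μ (t ∩ s) - ν (t ∩ s)) + ν t := by
      rw [← h4, ← h3]
      calc μ (t ∩ s) + μ (t \ s) ≤ μ (t ∩ s) + ν (t \ s) := by gcongr
        _ = (μ (t ∩ s) - ν (t ∩ s)) + ν (t ∩ s) + ν (t \ s) := by
            rw [tsub_add_cancel_of_le h1]
        _ = μ (t ∩ s) - ν (t ∩ s) + (ν (t ∩ s) + ν (t \ s)) := by ring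
    simpa [Measure.add_apply, hdapp t ht] using this
  have hd_le : dm ≤ μ - ν := by
    refine le_sInf fun d' hd' => ?_
    refine Measure.le_iff.2 fun t ht => ?_
    rw [hdapp t ht]
    have : μ (t ∩ s) ≤ d' (t ∩ s) + ν (t ∩ s) := by
      have := Measure.le_iff.1 hd' (t ∩ s) (ht.inter hsm)
      simpa [Measure.add_apply] using this
    have h5 : d' (t ∩ s) ≤ d' t := measure_mono Set.inter_subset_left
    exact tsub_le_iff_right.2 (this.trans (add_le_add_left h5 _))
  exact hmu_le.trans (add_le_add_left hd_le ν)

lemma tv_bound_one {α : Type*} [MeasurableSpace α] (m₁ m₂ : Measure α)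
    [IsFiniteMeasure m₁] [IsFiniteMeasure m₂] {f g : α → ℝ}
    (hf₁ : Integrable f m₁) (hf₂ : Integrable f m₂) (hfg : ∀ x, |f x| ≤ g x)
    (hg₁ : Integrable g m₁) (hg₂ : Integrable g m₂) :
    ∫ x, f x ∂m₂ - ∫ x, f x ∂m₁ ≤ 2 * ∫ x, g x ∂(mdiff m₂ m₁) := by
  have hg0 : ∀ x, 0 ≤ g x := fun x => (abs_nonneg _).trans (hfg x)
  have hgf0 : ∀ x, 0 ≤ g x + f x := fun x => by
    have := abs_le.1 (hfg x); linarith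
  have hgfle : ∀ x, g x + f x ≤ 2 * g x := fun x => by
    have := abs_le.1 (hfg x); linarith
  have hp : Integrable f (m₂ - m₁) := hf₂.mono_measure Measure.sub_le
  have hgp : Integrable g (m₂ - m₁) := hg₂.mono_measure Measure.sub_le
  have hgn : Integrable g (m₁ - m₂) := hg₁.mono_measure Measure.sub_le
  have hIp : Integrable (fun x => g x + f x) (m₂ - m₁) := hgp.add hp
  have hIm : Integrable (fun x => g x + f x) m₁ := hg₁.add hf₁
  have h2 : ∫ x, (g x + f x) ∂m₂ ≤ ∫ x, (g x + f x) ∂((m₂ - m₁) + m₁) := by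
    refine integral_mono_measure (aux_le_sub_add m₂ m₁) ?_ ?_
    · exact Filter.Eventually.of_forall hgf0
    · exact hIp.add_measure hIm
  rw [integral_add_measure hIp hIm, integral_add hg₂ hf₂,
    integral_add hg₁ hf₁] at h2
  have h3 : ∫ x, g x ∂m₁ ≤ ∫ x, g x ∂((m₁ - m₂) + m₂) := by
    refine integral_mono_measure (aux_le_sub_add m₁ m₂) ?_ (hgn.add_measure hg₂)
    exact Filter.Eventually.of_forall hg0
  rw [integral_add_measure hgn hg₂] at h3
  have h4 : ∫ x, (g x + f x) ∂(m₂ - m₁) ≤ 2 * ∫ x, g x ∂(m₂ - m₁) := by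
    rw [← integral_const_mul]
    exact integral_mono hIp (hgp.const_mul 2) hgfle
  have h5 : (0:ℝ) ≤ ∫ x, g x ∂(m₁ - m₂) := integral_nonneg hg0
  have h6 : ∫ x, g x ∂(mdiff m₂ m₁) = ∫ x, g x ∂(m₂ - m₁) + ∫ x, g x ∂(m₁ - m₂) :=
    integral_add_measure hgp hgn
  linarith

lemma tv_bound {α : Type*} [MeasurableSpace α] (m₁ m₂ : Measure α)
    [IsFiniteMeasure m₁] [IsFiniteMeasure m₂] {f g : α → ℝ}
    (hf₁ : Integrable f m₁) (hf₂ : Integrable f m₂) (hfg : ∀ x, |f x| ≤ g x)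
    (hg₁ : Integrable g m₁) (hg₂ : Integrable g m₂) :
    |∫ x, f x ∂m₂ - ∫ x, f x ∂m₁| ≤ 2 * ∫ x, g x ∂(mdiff m₂ m₁) := by
  have hsymm : mdiff m₁ m₂ = mdiff m₂ m₁ := add_comm _ _
  rw [abs_sub_le_iff]
  refine ⟨tv_bound_one m₁ m₂ hf₁ hf₂ hfg hg₁ hg₂, ?_⟩
  have := tv_bound_one m₂ m₁ hf₂ hf₁ hfg hg₂ hg₁
  rwa [hsymm] at this

lemma pi_integrable {α : Type*} [MeasurableSpace α] : ∀ {n : ℕ} (κ : Fin n → Measure α)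
    [∀ i, IsProbabilityMeasure (κ i)] {f : α → ℝ} (_hf : ∀ i, Integrable f (κ i)),
    Integrable (fun y : Fin n → α => ∏ i, f (y i)) (Measure.pi κ)
  | 0, κ, _, f, hf => by
      simp only [Finset.univ_eq_empty, Finset.prod_empty]
      exact integrable_const 1
  | n + 1, κ, _, f, hf => by
      have IH := pi_integrable (fun j : Fin n => κ ((0 : Fin (n+1)).succAbove j))
        (f := f) (fun j => hf _)
      have hG : Integrable (fun z : α × (Fin n → α) => f z.1 * ∏ j, f (z.2 j))
          ((κ 0).prod (Measure.pi fun j => κ ((0 : Fin (n+1)).succAbove j))) :=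
        (hf 0).mul_prod IH
      have hmp := measurePreserving_piFinSuccAbove κ 0
      have := (hmp.integrable_comp_emb
        (MeasurableEquiv.piFinSuccAbove (fun _ : Fin (n+1) => α) 0).measurableEmbedding).2 hG
      refine this.congr (Filter.Eventually.of_forall fun y => ?_)
      simp only [Function.comp_apply, MeasurableEquiv.piFinSuccAbove_apply]
      rw [Fin.prod_univ_succAbove (fun i => f (y i)) 0]
      simp [Fin.insertNthEquiv_symm_apply, Fin.removeNth]
      exact Or.inl (Finset.prod_congr rfl fun j _ => rfl)

lemma pi_integral {α : Type*} [MeasurableSpace α] : ∀ {n : ℕ} (κ : Fin n → Measure α)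
    [∀ i, IsProbabilityMeasure (κ i)] (f : α → ℝ),
    ∫ y : Fin n → α, ∏ i, f (y i) ∂Measure.pi κ = ∏ i, ∫ x, f x ∂κ i
  | 0, κ, _, f => by
      simp only [Finset.univ_eq_empty, Finset.prod_empty]
      simp
  | n + 1, κ, _, f => by
      have IH := pi_integral (fun j : Fin n => κ ((0 : Fin (n+1)).succAbove j)) f
      have hmp := measurePreserving_piFinSuccAbove κ 0
      have key := hmp.integral_comp'
        (f := MeasurableEquiv.piFinSuccAbove (fun _ : Fin (n+1) => α) 0)
        (fun z : α × (Fin n → α) => f z.1 * ∏ j, f (z.2 j))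
      have heq : (fun y : Fin (n+1) → α =>
          (fun z : α × (Fin n → α) => f z.1 * ∏ j, f (z.2 j))
            ((MeasurableEquiv.piFinSuccAbove (fun _ : Fin (n+1) => α) 0) y))
          = fun y => ∏ i, f (y i) := by
        funext y
        simp only [MeasurableEquiv.piFinSuccAbove_apply]
        rw [Fin.prod_univ_succAbove (fun i => f (y i)) 0]
        simp [Fin.insertNthEquiv_symm_apply, Fin.removeNth]
        exact Or.inl (Finset.prod_congr rfl fun j _ => rfl)
      rw [heq] at key
      rw [key, integral_prod_mul f (fun v : Fin n → α => ∏ j : Fin n, f (v j)), IH,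
        Fin.prod_univ_succAbove (fun i => ∫ x, f x ∂κ i) 0]

lemma peel_coord {α : Type*} [MeasurableSpace α] {n : ℕ} (κ : Fin (n+1) → Measure α)
    [∀ i, IsProbabilityMeasure (κ i)] (c : Fin (n+1)) (g : (Fin (n+1) → α) → ℝ)
    (hgi : Integrable (fun z : α × (Fin n → α) => g (c.insertNth z.1 z.2))
      ((κ c).prod (Measure.pi fun t => κ (c.succAbove t)))) :
    ∫ y, g y ∂Measure.pi κ
      = ∫ x, ∫ y, g (c.insertNth x y) ∂(Measure.pi fun t => κ (c.succAbove t)) ∂(κ c) := by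
  have hmp := (measurePreserving_piFinSuccAbove κ c).symm
  rw [← hmp.integral_comp' g]
  have heq : (fun z : α × (Fin n → α) =>
      g ((MeasurableEquiv.piFinSuccAbove (fun _ : Fin (n+1) => α) c).symm z))
      = fun z => g (c.insertNth z.1 z.2) := by
    funext z
    rfl
  calc ∫ z, g ((MeasurableEquiv.piFinSuccAbove (fun _ : Fin (n+1) => α) c).symm z)
        ∂((κ c).prod (Measure.pi fun t => κ (c.succAbove t)))
      = ∫ z, g (c.insertNth z.1 z.2)
        ∂((κ c).prod (Measure.pi fun t => κ (c.succAbove t))) := by rw [heq]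
    _ = ∫ x, ∫ y, g (c.insertNth x y) ∂(Measure.pi fun t => κ (c.succAbove t)) ∂(κ c) :=
        integral_prod _ hgi

end Helpers


section Growth

open MeasureTheory

lemma phi_growth {d : ℕ} (ℓ : ℝ) (hℓ : 0 < ℓ) {k : ℕ}
    (φ : (Fin (k + 1) → Euc d) → ℝ) (hφc : Continuous φ)
    (hsym : ∀ (e : Equiv.Perm (Fin (k + 1))) (x : Fin (k + 1) → Euc d), φ (x ∘ e) = φ x)
    (hlim : ∀ ε > (0:ℝ), ∃ M : ℝ, ∀ x : Fin (k + 1) → Euc d, M ≤ ‖x 0‖ →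
      |φ x| ≤ ε * ∏ i, (1 + ‖x i‖ ^ (ℓ / 2))) :
    ∃ C : ℝ, 1 ≤ C ∧ ∀ x, |φ x| ≤ C * ∏ i, (1 + ‖x i‖ ^ (ℓ / 2)) := by
  obtain ⟨M, hM⟩ := hlim 1 one_pos
  obtain ⟨C₀, hC₀⟩ := (isCompact_univ_pi fun _ : Fin (k+1) =>
    isCompact_closedBall (0 : Euc d) (max M 0)).exists_bound_of_continuousOn hφc.continuousOn
  refine ⟨max C₀ 1, le_max_right _ _, fun x => ?_⟩
  have hprod1 : (1:ℝ) ≤ ∏ i, (1 + ‖x i‖ ^ (ℓ/2)) := by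
    have h := Finset.prod_le_prod (f := fun _ : Fin (k+1) => (1:ℝ))
      (g := fun i => 1 + ‖x i‖ ^ (ℓ/2)) (s := Finset.univ)
      (fun i _ => zero_le_one)
      (fun i _ => le_add_of_nonneg_right (Real.rpow_nonneg (norm_nonneg _) _))
    simpa using h
  by_cases hx : ∀ i, ‖x i‖ ≤ max M 0
  · have hxK : x ∈ Set.pi Set.univ fun _ : Fin (k+1) =>
        Metric.closedBall (0 : Euc d) (max M 0) := by
      intro i _
      simpa [Metric.mem_closedBall, dist_zero_right] using hx i
    calc |φ x| = ‖φ x‖ := (Real.norm_eq_abs _).symm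
      _ ≤ C₀ := hC₀ x hxK
      _ ≤ max C₀ 1 := le_max_left _ _
      _ ≤ max C₀ 1 * ∏ i, (1 + ‖x i‖ ^ (ℓ/2)) :=
          le_mul_of_one_le_right (le_trans zero_le_one (le_max_right _ _)) hprod1
  · push_neg at hx
    obtain ⟨i, hi⟩ := hx
    have h0 : M ≤ ‖(x ∘ Equiv.swap 0 i) 0‖ := by
      simp only [Function.comp_apply, Equiv.swap_apply_left]
      exact (le_max_left M 0).trans hi.le
    have hb := hM (x ∘ Equiv.swap 0 i) h0
    rw [hsym (Equiv.swap 0 i) x] at hb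
    have hre : ∏ j, (1 + ‖(x ∘ Equiv.swap 0 i) j‖ ^ (ℓ/2)) = ∏ j, (1 + ‖x j‖ ^ (ℓ/2)) :=
      Equiv.prod_comp (Equiv.swap 0 i) (fun j => 1 + ‖x j‖ ^ (ℓ/2))
    rw [hre, one_mul] at hb
    calc |φ x| ≤ ∏ j, (1 + ‖x j‖ ^ (ℓ/2)) := hb
      _ ≤ max C₀ 1 * ∏ j, (1 + ‖x j‖ ^ (ℓ/2)) := by
          refine le_mul_of_one_le_left (zero_le_one.trans hprod1) (le_max_right _ _)

lemma ball_moment {d : ℕ} (ℓ : ℝ) (hℓ : 0 < ℓ) (μ : Measure (Euc d)) (hμ : MemP ℓ μ) (r : ℝ) :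
    ∃ B : ℝ, 1 ≤ B ∧ ∀ m ∈ ball ℓ μ r,
      Integrable (fun x : Euc d => 1 + ‖x‖ ^ (ℓ/2)) m ∧
      ∫ x, (1 + ‖x‖ ^ (ℓ/2)) ∂m ≤ B := by
  set w : Euc d → ℝ := fun x => 1 + ‖x‖ ^ (ℓ/2) with hw
  have hwc : Continuous w :=
    continuous_const.add (continuous_norm.rpow_const fun x => Or.inr (by positivity))
  have hw0 : ∀ x, 0 ≤ w x := fun x => by
    simp only [hw]; positivity
  set Iμ := ∫⁻ y, ENNReal.ofReal (‖y‖ ^ ℓ) ∂μ with hIμ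
  set Bv : ℝ≥0∞ := 2 + ENNReal.ofReal (2 ^ ℓ) * ((ENNReal.ofReal r) ^ (max ℓ 1) + Iμ) with hBv
  have hBvt : Bv ≠ ⊤ := by
    have h1 : (ENNReal.ofReal r) ^ (max ℓ 1) ≠ ⊤ :=
      ENNReal.rpow_ne_top_of_nonneg (le_trans zero_le_one (le_max_right _ _))
        ENNReal.ofReal_ne_top
    have h2 : Iμ ≠ ⊤ := hμ.2.ne
    simp only [hBv]
    refine ENNReal.add_ne_top.2 ⟨by simp, ENNReal.mul_ne_top ENNReal.ofReal_ne_top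
      (ENNReal.add_ne_top.2 ⟨h1, h2⟩)⟩
  refine ⟨max 1 Bv.toReal, le_max_left _ _, fun m hm => ?_⟩
  obtain ⟨⟨hmp, _hmm⟩, hmw⟩ := hm
  haveI := hmp
  simp only [Wl, if_neg hℓ.ne'] at hmw
  obtain ⟨ρ, hρ⟩ := iInf_lt_iff.1 hmw
  obtain ⟨hρS, hρlt⟩ := iInf_lt_iff.1 hρ
  obtain ⟨hρp, hfst, hsnd⟩ := hρS
  haveI := hρp
  have hme : (0:ℝ) < max ℓ 1 := lt_of_lt_of_le one_pos (le_max_right _ _)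
  have hcost : ∫⁻ p, ENNReal.ofReal (dist p.1 p.2 ^ ℓ) ∂ρ < (ENNReal.ofReal r) ^ (max ℓ 1) := by
    have h := ENNReal.rpow_lt_rpow hρlt hme
    rwa [← ENNReal.rpow_mul, one_div, inv_mul_cancel₀ hme.ne', ENNReal.rpow_one] at h
  have hnm : Measurable fun x : Euc d => ENNReal.ofReal (‖x‖ ^ ℓ) :=
    ENNReal.measurable_ofReal.comp
      ((continuous_norm.rpow_const fun x => Or.inr hℓ.le).measurable)
  have hdm : Measurable fun p : Euc d × Euc d => ENNReal.ofReal (dist p.1 p.2 ^ ℓ) :=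
    ENNReal.measurable_ofReal.comp
      (((continuous_fst.dist continuous_snd).rpow_const fun x => Or.inr hℓ.le).measurable)
  have hsm2 : Measurable fun p : Euc d × Euc d => ENNReal.ofReal (‖p.2‖ ^ ℓ) :=
    ENNReal.measurable_ofReal.comp
      (((continuous_snd.norm).rpow_const fun x => Or.inr hℓ.le).measurable)
  have hmom : ∫⁻ x, ENNReal.ofReal (‖x‖ ^ ℓ) ∂m ≤
      ENNReal.ofReal (2 ^ ℓ) * ((ENNReal.ofReal r) ^ (max ℓ 1) + Iμ) := by
    have hm1 : ∫⁻ x, ENNReal.ofReal (‖x‖ ^ ℓ) ∂m = ∫⁻ p, ENNReal.ofReal (‖p.1‖ ^ ℓ) ∂ρ := by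
      rw [← hfst, lintegral_map hnm measurable_fst]
    have hm2 : ∫⁻ p, ENNReal.ofReal (‖p.2‖ ^ ℓ) ∂ρ = Iμ := by
      rw [hIμ, ← hsnd, lintegral_map hnm measurable_snd]
    have hpt : ∀ p : Euc d × Euc d, ENNReal.ofReal (‖p.1‖ ^ ℓ) ≤
        ENNReal.ofReal (2 ^ ℓ) *
          (ENNReal.ofReal (dist p.1 p.2 ^ ℓ) + ENNReal.ofReal (‖p.2‖ ^ ℓ)) := by
      intro p
      rw [← ENNReal.ofReal_add (by positivity) (by positivity),
        ← ENNReal.ofReal_mul (by positivity)]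
      refine ENNReal.ofReal_le_ofReal ?_
      have htri : ‖p.1‖ ≤ dist p.1 p.2 + ‖p.2‖ := by
        calc ‖p.1‖ = ‖p.1 - p.2 + p.2‖ := by rw [sub_add_cancel]
          _ ≤ ‖p.1 - p.2‖ + ‖p.2‖ := norm_add_le _ _
          _ = dist p.1 p.2 + ‖p.2‖ := by rw [dist_eq_norm]
      have ha : (0:ℝ) ≤ dist p.1 p.2 := dist_nonneg
      have hb : (0:ℝ) ≤ ‖p.2‖ := norm_nonneg _
      calc ‖p.1‖ ^ ℓ ≤ (dist p.1 p.2 + ‖p.2‖) ^ ℓ :=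
            Real.rpow_le_rpow (norm_nonneg _) htri hℓ.le
        _ ≤ (2 * max (dist p.1 p.2) ‖p.2‖) ^ ℓ := by
            refine Real.rpow_le_rpow (by positivity) ?_ hℓ.le
            rcases le_total (dist p.1 p.2) ‖p.2‖ with h|h
            · rw [max_eq_right h]; linarith
            · rw [max_eq_left h]; linarith
        _ = 2 ^ ℓ * (max (dist p.1 p.2) ‖p.2‖) ^ ℓ :=
            Real.mul_rpow (by norm_num) (le_max_of_le_left ha)
        _ ≤ 2 ^ ℓ * (dist p.1 p.2 ^ ℓ + ‖p.2‖ ^ ℓ) := by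
            refine mul_le_mul_of_nonneg_left ?_ (by positivity)
            rcases max_cases (dist p.1 p.2) ‖p.2‖ with ⟨h1, _⟩|⟨h1, _⟩ <;> rw [h1]
            · exact le_add_of_nonneg_right (by positivity)
            · exact le_add_of_nonneg_left (by positivity)
    calc ∫⁻ x, ENNReal.ofReal (‖x‖ ^ ℓ) ∂m
        = ∫⁻ p, ENNReal.ofReal (‖p.1‖ ^ ℓ) ∂ρ := hm1
      _ ≤ ∫⁻ p, ENNReal.ofReal (2^ℓ) *
            (ENNReal.ofReal (dist p.1 p.2 ^ ℓ) + ENNReal.ofReal (‖p.2‖ ^ ℓ)) ∂ρ :=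
          lintegral_mono hpt
      _ = ENNReal.ofReal (2^ℓ) * (∫⁻ p, ENNReal.ofReal (dist p.1 p.2 ^ ℓ) ∂ρ +
            ∫⁻ p, ENNReal.ofReal (‖p.2‖^ℓ) ∂ρ) := by
          rw [lintegral_const_mul' _ _ ENNReal.ofReal_ne_top, lintegral_add_left hdm]
      _ ≤ ENNReal.ofReal (2^ℓ) * ((ENNReal.ofReal r) ^ (max ℓ 1) + Iμ) := by
          rw [hm2]
          gcongr
  have hptw : ∀ x : Euc d, ENNReal.ofReal (w x) ≤ 2 + ENNReal.ofReal (‖x‖ ^ ℓ) := by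
    intro x
    have h1 : w x ≤ 2 + ‖x‖ ^ ℓ := by
      have h2 : ‖x‖ ^ (ℓ/2) ≤ 1 + ‖x‖ ^ ℓ := by
        rcases le_or_gt ‖x‖ 1 with h|h
        · exact (Real.rpow_le_one (norm_nonneg _) h (by positivity)).trans
            (le_add_of_nonneg_right (by positivity))
        · exact (Real.rpow_le_rpow_of_exponent_le h.le (by linarith)).trans
            (le_add_of_nonneg_left zero_le_one)
      simp only [hw]; linarith
    calc ENNReal.ofReal (w x) ≤ ENNReal.ofReal (2 + ‖x‖ ^ ℓ) := ENNReal.ofReal_le_ofReal h1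
      _ = ENNReal.ofReal 2 + ENNReal.ofReal (‖x‖ ^ ℓ) :=
          ENNReal.ofReal_add (by norm_num) (by positivity)
      _ = 2 + ENNReal.ofReal (‖x‖ ^ ℓ) := by norm_num
  have hlw : ∫⁻ x, ENNReal.ofReal (w x) ∂m ≤ Bv := by
    calc ∫⁻ x, ENNReal.ofReal (w x) ∂m
        ≤ ∫⁻ x, (2 + ENNReal.ofReal (‖x‖ ^ ℓ)) ∂m := lintegral_mono hptw
      _ = 2 + ∫⁻ x, ENNReal.ofReal (‖x‖ ^ ℓ) ∂m := by
          rw [lintegral_add_left measurable_const, lintegral_const, measure_univ, mul_one]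
      _ ≤ Bv := by rw [hBv]; exact add_le_add_right hmom 2
  have hwint : Integrable w m := by
    refine ⟨hwc.aestronglyMeasurable, ?_⟩
    rw [hasFiniteIntegral_iff_ofReal (Filter.Eventually.of_forall hw0)]
    exact lt_of_le_of_lt hlw hBvt.lt_top
  refine ⟨hwint, ?_⟩
  rw [integral_eq_lintegral_of_nonneg_ae (Filter.Eventually.of_forall hw0)
    hwc.aestronglyMeasurable]
  calc (∫⁻ x, ENNReal.ofReal (w x) ∂m).toReal ≤ Bv.toReal := ENNReal.toReal_mono hBvt hlw
    _ ≤ max 1 Bv.toReal := le_max_right _ _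

end Growth

/-- The linear functional derivative of the U-statistic functional associated to `φ`:
`δU/δm(m, x₁) = n ∫ (φ(x₁, rest) - φ(0, rest)) m^{⊗(n-1)}(drest)` with `n = k+1`. -/
def USderiv {d : ℕ} (k : ℕ) (φ : (Fin (k + 1) → Euc d) → ℝ) (m : Measure (Euc d))
    (x₁ : Euc d) : ℝ :=
  ((k : ℝ) + 1) *
    ∫ rest : Fin k → Euc d, (φ (Fin.cons x₁ rest) - φ (Fin.cons 0 rest))
      ∂(Measure.pi fun _ => m)

/-- RU6 with `α = 1` for the U-statistic functional. -/
theorem stmt18 {d : ℕ} (ℓ : ℝ) (hℓ : 0 < ℓ) (k : ℕ) (hk : 1 ≤ k)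
    (φ : (Fin (k + 1) → Euc d) → ℝ) (hφc : Continuous φ)
    (hsym : ∀ (e : Equiv.Perm (Fin (k + 1))) (x : Fin (k + 1) → Euc d), φ (x ∘ e) = φ x)
    (hlim : ∀ ε > (0:ℝ), ∃ M : ℝ, ∀ x : Fin (k + 1) → Euc d, M ≤ ‖x 0‖ →
      |φ x| ≤ ε * ∏ i, (1 + ‖x i‖ ^ (ℓ / 2)))
    (μ : Measure (Euc d)) (hμ : MemP ℓ μ) (r : ℝ) (hr : 0 < r) :
    ∃ Ct : ℝ, ∀ m₁ ∈ ball ℓ μ r, ∀ m₂ ∈ ball ℓ μ r, ∀ x₁ : Euc d,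
      |USderiv k φ m₂ x₁ - USderiv k φ m₁ x₁| ≤
        Ct * (∫ x, (1 + ‖x‖ ^ (ℓ / 2)) ∂(mdiff m₂ m₁)) * (1 + ‖x₁‖ ^ (ℓ / 2)) := by
  obtain ⟨C, hC1, hCb⟩ := phi_growth ℓ hℓ φ hφc hsym hlim
  obtain ⟨B, hB1, hBall⟩ := ball_moment ℓ hℓ μ hμ r
  set w : Euc d → ℝ := fun x => 1 + ‖x‖ ^ (ℓ/2) with hw
  have hwc : Continuous w :=
    continuous_const.add (continuous_norm.rpow_const fun x => Or.inr (by positivity))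
  have hw1 : ∀ x, (1:ℝ) ≤ w x := fun x =>
    le_add_of_nonneg_right (Real.rpow_nonneg (norm_nonneg _) _)
  have hw0 : ∀ x, (0:ℝ) ≤ w x := fun x => zero_le_one.trans (hw1 x)
  obtain ⟨k', rfl⟩ : ∃ k', k = k' + 1 := ⟨k - 1, (Nat.succ_pred_eq_of_pos hk).symm⟩
  refine ⟨((k':ℝ) + 1 + 1) * ((k':ℝ) + 1) * (2 * (2 * C * B ^ k')),
    fun m₁ hm₁ m₂ hm₂ x₁ => ?_⟩
  haveI h1p : IsProbabilityMeasure m₁ := hm₁.1.1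
  haveI h2p : IsProbabilityMeasure m₂ := hm₂.1.1
  obtain ⟨hwint₁, hwB₁⟩ := hBall m₁ hm₁
  obtain ⟨hwint₂, hwB₂⟩ := hBall m₂ hm₂
  set g : (Fin (k'+1) → Euc d) → ℝ :=
    fun rest => φ (Fin.cons x₁ rest) - φ (Fin.cons 0 rest) with hgdef
  have hconsc : ∀ a : Euc d,
      Continuous fun rest : Fin (k'+1) → Euc d => (Fin.cons a rest : Fin (k'+2) → Euc d) := by
    intro a
    have heq : (fun rest : Fin (k'+1) → Euc d => (0 : Fin (k'+2)).insertNth a rest)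
        = fun rest => (Fin.cons a rest : Fin (k'+2) → Euc d) :=
      funext fun rest => Fin.insertNth_zero' a rest
    rw [← heq]
    exact Continuous.finInsertNth 0 continuous_const continuous_id
  have hgc : Continuous g := (hφc.comp (hconsc x₁)).sub (hφc.comp (hconsc 0))
  have hprodw : ∀ rest : Fin (k'+1) → Euc d,
      ∏ i, w ((Fin.cons x₁ rest : Fin (k'+2) → Euc d) i) = w x₁ * ∏ t, w (rest t) := by
    intro rest
    rw [Fin.prod_univ_succ]
    simp [Fin.cons_zero, Fin.cons_succ]
  have hw0e : w 0 = 1 := by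
    simp only [hw, norm_zero]
    rw [Real.zero_rpow (by positivity : ℓ/2 ≠ 0)]
    norm_num
  have hprodw0 : ∀ rest : Fin (k'+1) → Euc d,
      ∏ i, w ((Fin.cons (0:Euc d) rest : Fin (k'+2) → Euc d) i) = ∏ t, w (rest t) := by
    intro rest
    rw [Fin.prod_univ_succ]
    simp [Fin.cons_zero, Fin.cons_succ, hw0e]
  have hprodnn : ∀ rest : Fin (k'+1) → Euc d, (0:ℝ) ≤ ∏ t, w (rest t) := fun rest =>
    Finset.prod_nonneg fun t _ => hw0 _
  have hgbd : ∀ rest, |g rest| ≤ 2 * C * w x₁ * ∏ t, w (rest t) := by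
    intro rest
    have h1 := hCb (Fin.cons x₁ rest)
    have h2 := hCb (Fin.cons 0 rest)
    rw [hprodw rest] at h1
    rw [hprodw0 rest] at h2
    have h3 : C * ∏ t, w (rest t) ≤ C * w x₁ * ∏ t, w (rest t) := by
      have := mul_le_mul_of_nonneg_left (hw1 x₁) (le_trans zero_le_one hC1)
      nlinarith [hprodnn rest]
    calc |g rest| ≤ |φ (Fin.cons x₁ rest)| + |φ (Fin.cons 0 rest)| := abs_sub _ _
      _ ≤ C * (w x₁ * ∏ t, w (rest t)) + C * ∏ t, w (rest t) := add_le_add h1 h2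
      _ ≤ 2 * C * w x₁ * ∏ t, w (rest t) := by nlinarith [hprodnn rest]
  set κf : ℕ → Fin (k'+1) → Measure (Euc d) := fun j i => if (i:ℕ) < j then m₂ else m₁
    with hκf
  haveI hκp : ∀ j i, IsProbabilityMeasure (κf j i) := fun j i => by
    simp only [hκf]; split_ifs <;> infer_instance
  set A : ℕ → ℝ := fun j => ∫ rest, g rest ∂Measure.pi (κf j) with hA
  have hπ0 : Measure.pi (κf 0) = Measure.pi (fun _ : Fin (k'+1) => m₁) := by
    congr 1
  have hπtop : Measure.pi (κf (k'+1)) = Measure.pi (fun _ : Fin (k'+1) => m₂) := by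
    congr 1
    funext i
    simp [hκf, i.isLt]
  have hdiffU : USderiv (k'+1) φ m₂ x₁ - USderiv (k'+1) φ m₁ x₁
      = ((k':ℝ) + 1 + 1) * (A (k'+1) - A 0) := by
    simp only [USderiv, hA, hπ0, hπtop, hgdef]
    push_cast
    ring
  set Dx : ℝ := 2 * C * B ^ k' * w x₁ with hDx
  set I : ℝ := ∫ x, w x ∂(mdiff m₂ m₁) with hIdef
  have hterm : ∀ j < k'+1, |A (j+1) - A j| ≤ 2 * (Dx * I) := by
    intro j hj
    set c : Fin (k'+1) := ⟨j, hj⟩ with hc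
    set ρ : Fin k' → Measure (Euc d) := fun t => κf j (c.succAbove t) with hρ
    haveI : ∀ t, IsProbabilityMeasure (ρ t) := fun t => hκp j _
    have hρeq : (fun t => κf (j+1) (c.succAbove t)) = ρ := by
      funext t
      have hne : ((c.succAbove t : Fin (k'+1)) : ℕ) ≠ j := by
        have h := Fin.succAbove_ne c t
        simpa [hc, Fin.ext_iff] using h
      simp only [hκf, hρ]
      by_cases hv : ((c.succAbove t : Fin (k'+1)) : ℕ) < j
      · rw [if_pos (Nat.lt_succ_of_lt hv), if_pos hv]
      · rw [if_neg (by omega), if_neg hv]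
    have hκc1 : κf (j+1) c = m₂ := by
      simp only [hκf]
      rw [if_pos]
      exact Nat.lt_succ_self j
    have hκc0 : κf j c = m₁ := by
      simp only [hκf]
      rw [if_neg (lt_irrefl j)]
    have hwint_ρ : ∀ t, Integrable w (ρ t) := fun t => by
      simp only [hρ, hκf]
      split_ifs
      exacts [hwint₂, hwint₁]
    have hπint : Integrable (fun y : Fin k' → Euc d => ∏ t, w (y t)) (Measure.pi ρ) :=
      pi_integrable ρ hwint_ρ
    have hρB : ∀ t, ∫ x, w x ∂ρ t ≤ B := fun t => by
      simp only [hρ, hκf]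
      split_ifs
      exacts [hwB₂, hwB₁]
    have hπB : ∫ y, ∏ t, w (y t) ∂Measure.pi ρ ≤ B ^ k' := by
      rw [pi_integral ρ w]
      calc ∏ t, ∫ x, w x ∂ρ t ≤ ∏ _t : Fin k', B :=
            Finset.prod_le_prod (fun t _ => integral_nonneg hw0) (fun t _ => hρB t)
        _ = B ^ k' := by simp
    have hπnn : (0:ℝ) ≤ ∫ y, ∏ t, w (y t) ∂Measure.pi ρ :=
      integral_nonneg fun y => Finset.prod_nonneg fun t _ => hw0 _
    have hinsc : Continuous fun z : Euc d × (Fin k' → Euc d) =>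
        (c.insertNth z.1 z.2 : Fin (k'+1) → Euc d) :=
      Continuous.finInsertNth (A := fun _ : Fin (k'+1) => Euc d) c continuous_fst continuous_snd
    have hzbd : ∀ z : Euc d × (Fin k' → Euc d),
        |g (c.insertNth z.1 z.2)| ≤ (2 * C * w x₁) * (w z.1 * ∏ t, w (z.2 t)) := by
      intro z
      have h := hgbd (c.insertNth z.1 z.2)
      rw [Fin.prod_univ_succAbove _ c] at h
      simpa [Fin.insertNth_apply_same, Fin.insertNth_apply_succAbove, mul_assoc] using h
    have hgiI : ∀ (ν : Measure (Euc d)), IsProbabilityMeasure ν → Integrable w ν →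
        Integrable (fun z : Euc d × (Fin k' → Euc d) => g (c.insertNth z.1 z.2))
          (ν.prod (Measure.pi ρ)) := by
      intro ν hν hwintν
      haveI := hν
      have hdom : Integrable (fun z : Euc d × (Fin k' → Euc d) =>
          (2 * C * w x₁) * (w z.1 * ∏ t, w (z.2 t))) (ν.prod (Measure.pi ρ)) :=
        (hwintν.mul_prod hπint).const_mul _
      refine hdom.mono' ((hgc.comp hinsc).aestronglyMeasurable)
        (Filter.Eventually.of_forall fun z => ?_)
      rw [Real.norm_eq_abs]
      exact hzbd z
    set Hbar : Euc d → ℝ := fun x => ∫ y, g (c.insertNth x y) ∂Measure.pi ρ with hHbar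
    have hA1 : A (j+1) = ∫ x, Hbar x ∂m₂ := by
      have hgi := hgiI m₂ h2p hwint₂
      rw [← hκc1, ← hρeq] at hgi
      have hpeel := peel_coord (κf (j+1)) c g hgi
      rw [hA]
      simp only []
      rw [hpeel, hκc1, hρeq]
    have hA0' : A j = ∫ x, Hbar x ∂m₁ := by
      have hgi := hgiI m₁ h1p hwint₁
      rw [← hκc0] at hgi
      have hpeel := peel_coord (κf j) c g hgi
      rw [hA]
      simp only []
      rw [hpeel, hκc0]
    have hint_slice : ∀ x, Integrable (fun y => g (c.insertNth x y)) (Measure.pi ρ) := by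
      intro x
      have hdom : Integrable (fun y : Fin k' → Euc d =>
          (2 * C * w x₁ * w x) * ∏ t, w (y t)) (Measure.pi ρ) := hπint.const_mul _
      have hcx : Continuous fun y : Fin k' → Euc d =>
          (c.insertNth x y : Fin (k'+1) → Euc d) :=
        Continuous.finInsertNth (A := fun _ : Fin (k'+1) => Euc d) c continuous_const continuous_id
      refine hdom.mono' ((hgc.comp hcx).aestronglyMeasurable)
        (Filter.Eventually.of_forall fun y => ?_)
      rw [Real.norm_eq_abs]
      exact (hzbd (x, y)).trans_eq (by ring)
    have hHsm : MeasureTheory.StronglyMeasurable Hbar := by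
      have hcont : Continuous fun z : Euc d × (Fin k' → Euc d) => g (c.insertNth z.1 z.2) :=
        hgc.comp hinsc
      exact (show MeasureTheory.StronglyMeasurable
          (Function.uncurry fun x y => g (c.insertNth x y)) from
        hcont.stronglyMeasurable).integral_prod_right
    have hHbd : ∀ x, |Hbar x| ≤ Dx * w x := by
      intro x
      have h1 : |Hbar x| ≤ ∫ y, |g (c.insertNth x y)| ∂Measure.pi ρ := by
        simpa [Real.norm_eq_abs] using
          norm_integral_le_integral_norm (μ := Measure.pi ρ)
            (fun y => g (c.insertNth x y))
      have h2 : ∫ y, |g (c.insertNth x y)| ∂Measure.pi ρ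
          ≤ ∫ y, (2 * C * w x₁ * w x) * ∏ t, w (y t) ∂Measure.pi ρ :=
        integral_mono (hint_slice x).abs (hπint.const_mul _)
          (fun y => (hzbd (x, y)).trans_eq (by ring))
      have h3 : ∫ y, (2 * C * w x₁ * w x) * ∏ t, w (y t) ∂Measure.pi ρ
          = (2 * C * w x₁ * w x) * ∫ y, ∏ t, w (y t) ∂Measure.pi ρ :=
        integral_const_mul _ _
      have hnn : (0:ℝ) ≤ 2 * C * w x₁ * w x := by
        have hC0 : (0:ℝ) ≤ C := zero_le_one.trans hC1
        positivity
      calc |Hbar x| ≤ (2 * C * w x₁ * w x) * ∫ y, ∏ t, w (y t) ∂Measure.pi ρ := by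
            rw [← h3]; exact h1.trans h2
        _ ≤ (2 * C * w x₁ * w x) * B ^ k' := mul_le_mul_of_nonneg_left hπB hnn
        _ = Dx * w x := by rw [hDx]; ring
    have hHint₁ : Integrable Hbar m₁ :=
      (hwint₁.const_mul Dx).mono' hHsm.aestronglyMeasurable
        (Filter.Eventually.of_forall fun x => by rw [Real.norm_eq_abs]; exact hHbd x)
    have hHint₂ : Integrable Hbar m₂ :=
      (hwint₂.const_mul Dx).mono' hHsm.aestronglyMeasurable
        (Filter.Eventually.of_forall fun x => by rw [Real.norm_eq_abs]; exact hHbd x)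
    have htv := tv_bound m₁ m₂ hHint₁ hHint₂ hHbd
      (hwint₁.const_mul Dx) (hwint₂.const_mul Dx)
    rw [hA1, hA0']
    calc |∫ x, Hbar x ∂m₂ - ∫ x, Hbar x ∂m₁| ≤ 2 * ∫ x, Dx * w x ∂(mdiff m₂ m₁) := htv
      _ = 2 * (Dx * I) := by rw [integral_const_mul, hIdef]
  have htel : A (k'+1) - A 0 = ∑ j ∈ Finset.range (k'+1), (A (j+1) - A j) :=
    (Finset.sum_range_sub A (k'+1)).symm
  have hsum : |A (k'+1) - A 0| ≤ ((k':ℝ)+1) * (2 * (Dx * I)) := by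
    rw [htel]
    refine (Finset.abs_sum_le_sum_abs _ _).trans ?_
    calc ∑ j ∈ Finset.range (k'+1), |A (j+1) - A j|
        ≤ ∑ _j ∈ Finset.range (k'+1), 2 * (Dx * I) :=
          Finset.sum_le_sum fun j hj => hterm j (Finset.mem_range.1 hj)
      _ = ((k':ℝ)+1) * (2 * (Dx * I)) := by
          rw [Finset.sum_const, Finset.card_range, nsmul_eq_mul]
          push_cast
          ring
  have hfinal : |USderiv (k'+1) φ m₂ x₁ - USderiv (k'+1) φ m₁ x₁|
      ≤ ((k':ℝ) + 1 + 1) * (((k':ℝ)+1) * (2 * (Dx * I))) := by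
    rw [hdiffU, abs_mul, abs_of_nonneg (by positivity : (0:ℝ) ≤ (k':ℝ) + 1 + 1)]
    exact mul_le_mul_of_nonneg_left hsum (by positivity)
  refine hfinal.trans_eq ?_
  rw [hDx, hIdef, hw]
  ring
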